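/- Let Γ be a group, R a real closed extension field of ℝ, C = R[i], and φ : ω(Γ) → C a completely positive ℂ-linear functional with φ(a*) = conj(φ(a)) for all a ∈ ω(Γ). Then for all s, h ∈ Γ: (i) |φ(c(s)*c(h))| ≤ (1/√2)·(φ(c(s)*c(s)) + φ(c(h)*c(h))), and (ii) φ(c(sh)*c(sh)) ≤ 2·(φ(c(s)*c(s)) + φ(c(h)*c(h))). -/

import Mathlib

open Polynomial Matrix

/-- A linearly ordered field is *real closed* if every nonnegative element is a square and
every polynomial of odd degree has a root. -/
def IsRealClosed' (R : Type*) [Field R] [LinearOrder R] [IsStrictOrderedRing R] : Prop :=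
  (∀ x : R, 0 ≤ x → ∃ y : R, y ^ 2 = x) ∧
    ∀ p : Polynomial R, Odd p.natDegree → ∃ x : R, p.IsRoot x

noncomputable section

set_option maxRecDepth 8000

/-- `Cplx R = R[i] = R[X]/(X² + 1)`. -/
abbrev Cplx (R : Type*) [CommRing R] : Type _ := AdjoinRoot (X ^ 2 + 1 : R[X])

namespace Cplx

variable (R : Type*) [CommRing R]

/-- The imaginary unit `i` of `R[i]`. -/
def I : Cplx R := AdjoinRoot.root _

theorem I_sq : (I R) ^ 2 = -1 := by
  have h : (I R) ^ 2 + 1 = 0 := by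
    have h := AdjoinRoot.eval₂_root (X ^ 2 + 1 : R[X])
    simp only [eval₂_add, eval₂_pow, eval₂_X, eval₂_one] at h
    exact h
  exact eq_neg_of_add_eq_zero_left h

variable {R}

/-- Conjugation on `R[i]`: the `R`-algebra involution determined by `i ↦ -i`. -/
def conj : Cplx R →+* Cplx R :=
  AdjoinRoot.lift (algebraMap R _) (-(I R)) (by
    have h : (I R) ^ 2 + 1 = 0 := by
      have h := AdjoinRoot.eval₂_root (X ^ 2 + 1 : R[X])
      simp only [eval₂_add, eval₂_pow, eval₂_X, eval₂_one] at h
      exact h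
    simp only [eval₂_add, eval₂_pow, eval₂_X, eval₂_one]
    calc (-(I R)) ^ 2 + 1 = (I R) ^ 2 + 1 := by ring
    _ = 0 := h)

/-- `z ∈ R[i]` is *nonnegative* if it lies in `R` and is nonnegative there. -/
def nonneg {R' : Type*} [Field R'] [LinearOrder R'] [IsStrictOrderedRing R'] (z : Cplx R') : Prop :=
  ∃ r : R', 0 ≤ r ∧ z = algebraMap R' (Cplx R') r

/-- `z ∈ R[i]` is *positive* if it lies in `R` and is positive there. -/
def pos {R' : Type*} [Field R'] [LinearOrder R'] [IsStrictOrderedRing R'] (z : Cplx R') : Prop :=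
  ∃ r : R', 0 < r ∧ z = algebraMap R' (Cplx R') r

/-- The embedding `ℂ = ℝ[i] → R[i]` induced by an embedding `f : ℝ → R`,
`x + y·i ↦ f x + f y · i`. -/
def emb (f : ℝ →+* R) : ℂ →+* Cplx R where
  toFun z := algebraMap R (Cplx R) (f z.re) + algebraMap R (Cplx R) (f z.im) * I R
  map_one' := by simp
  map_zero' := by simp
  map_add' z w := by
    simp only [Complex.add_re, Complex.add_im, map_add]
    ring
  map_mul' z w := by
    have hI : (I R) ^ 2 = -1 := I_sq R
    simp only [Complex.mul_re, Complex.mul_im, map_add, map_sub, _root_.map_mul]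
    linear_combination (-(algebraMap R (Cplx R) (f z.im) * algebraMap R (Cplx R) (f w.im))) * hI

/-- A matrix with entries in `R[i]` is positive semidefinite if
`∑ⱼₖ conj(zⱼ)·zₖ·Mⱼₖ ≥ 0` for all vectors `z`. -/
def PSD {R' : Type*} [Field R'] [LinearOrder R'] [IsStrictOrderedRing R'] {m : ℕ}
    (M : Matrix (Fin m) (Fin m) (Cplx R')) : Prop :=
  ∀ z : Fin m → Cplx R', Cplx.nonneg (∑ j, ∑ k, Cplx.conj (z j) * z k * M j k)

end Cplx

universe u v


variable (Γ : Type u) [Group Γ]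

/-- The involution of the complex group algebra `ℂ[Γ]`:
`(∑ a_g·g)* = ∑ conj(a_g)·g⁻¹`. -/
def gstar (a : MonoidAlgebra ℂ Γ) : MonoidAlgebra ℂ Γ :=
  a.coeff.sum fun g c => MonoidAlgebra.single g⁻¹ (starRingEnd ℂ c)

/-- The `ℓ¹`-norm of an element of `ℂ[Γ]`: `‖∑ a_g·g‖₁ = ∑ |a_g|`. -/
def l1norm (a : MonoidAlgebra ℂ Γ) : ℝ :=
  a.coeff.sum fun _ c => ‖c‖

/-- The set `Σ²ℂ[Γ]` of sums of hermitian squares in the group algebra. -/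
def SOS : Set (MonoidAlgebra ℂ Γ) :=
  {x | ∃ (n : ℕ) (a : Fin n → MonoidAlgebra ℂ Γ), x = ∑ i, gstar Γ (a i) * a i}

/-- The hermitian elements `ℂ[Γ]^h = {a : a* = a}`. -/
def herm : Set (MonoidAlgebra ℂ Γ) := {a | gstar Γ a = a}

/-- The augmentation homomorphism `ε : ℂ[Γ] → ℂ`, `∑ a_g·g ↦ ∑ a_g`. -/
def aug : MonoidAlgebra ℂ Γ →ₐ[ℂ] ℂ := MonoidAlgebra.lift ℂ ℂ Γ 1

/-- The augmentation ideal `ω(Γ) = ker ε`. -/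
def omega : Set (MonoidAlgebra ℂ Γ) := {a | aug Γ a = 0}

/-- The hermitian part `ω(Γ)^h` of the augmentation ideal. -/
def omegaH : Set (MonoidAlgebra ℂ Γ) := {a | a ∈ omega Γ ∧ gstar Γ a = a}

/-- `Σ²ω(Γ)`: sums of hermitian squares of elements of the augmentation ideal. -/
def SOSomega : Set (MonoidAlgebra ℂ Γ) :=
  {x | ∃ (n : ℕ) (a : Fin n → MonoidAlgebra ℂ Γ),
    (∀ i, a i ∈ omega Γ) ∧ x = ∑ i, gstar Γ (a i) * a i}

/-- `ω²(Γ)`, the `ℂ`-span of products of two elements of the augmentation ideal. -/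
def omegaSq : Set (MonoidAlgebra ℂ Γ) :=
  (Submodule.span ℂ {x : MonoidAlgebra ℂ Γ |
    ∃ a ∈ omega Γ, ∃ b ∈ omega Γ, x = a * b} : Submodule ℂ (MonoidAlgebra ℂ Γ))

/-- `c(g) = g - 1 ∈ ω(Γ)`. -/
def cE (g : Γ) : MonoidAlgebra ℂ Γ := MonoidAlgebra.of ℂ Γ g - 1

/-- The Laplace operator `Δ(S) = |S| - ∑_{s ∈ S} s` of a finite subset `S ⊆ Γ`. -/
def Delta (S : Finset Γ) : MonoidAlgebra ℂ Γ :=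
  (S.card : MonoidAlgebra ℂ Γ) - ∑ s ∈ S, MonoidAlgebra.of ℂ Γ s


section OmegaFunctional

variable {R : Type v} [Field R] [LinearOrder R] [IsStrictOrderedRing R]
variable {G : Type u} [Group G]

/-- The conjugate transpose of a matrix over `ℂ[Γ]`: `(M*)ⱼₖ = (Mₖⱼ)*`. -/
def mstar {m : ℕ} (M : Matrix (Fin m) (Fin m) (MonoidAlgebra ℂ G)) :
    Matrix (Fin m) (Fin m) (MonoidAlgebra ℂ G) := fun j k => gstar G (M k j)

/-- `φ : ω(Γ) → C = R[i]` is `ℂ`-linear and satisfies `φ(a*) = conj (φ a)`.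
(A functional on the augmentation ideal is encoded as a total map on `ℂ[Γ]`, with all
conditions imposed only on `ω(Γ)`.) -/
def OmegaHermLinear (f : ℝ →+* R) (φ : MonoidAlgebra ℂ G → Cplx R) : Prop :=
  (∀ a b : MonoidAlgebra ℂ G, a ∈ omega G → b ∈ omega G → φ (a + b) = φ a + φ b) ∧
  (∀ (c : ℂ) (a : MonoidAlgebra ℂ G), a ∈ omega G → φ (c • a) = Cplx.emb f c * φ a) ∧
  (∀ a : MonoidAlgebra ℂ G, a ∈ omega G → φ (gstar G a) = Cplx.conj (φ a))

/-- `φ : ω(Γ) → C = R[i]` is *completely positive*: for every `m`, the entrywise map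
`Mₘ(ω(Γ)) → Mₘ(C)` sends sums of hermitian squares to positive semidefinite matrices. -/
def OmegaCompletelyPositive (φ : MonoidAlgebra ℂ G → Cplx R) : Prop :=
  ∀ (m n : ℕ) (B : Fin n → Matrix (Fin m) (Fin m) (MonoidAlgebra ℂ G)),
    (∀ l j k, B l j k ∈ omega G) →
    Cplx.PSD (fun j k => φ ((∑ l, mstar (B l) * B l) j k))

/-- `φ : ω(Γ) → C = R[i]` is *positive*: `φ(a*a) ≥ 0` for all `a ∈ ω(Γ)`. -/
def OmegaPositive (φ : MonoidAlgebra ℂ G → Cplx R) : Prop :=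
  ∀ a ∈ omega G, Cplx.nonneg (φ (gstar G a * a))

end OmegaFunctional

section AuxCplx

variable {R : Type v} [Field R] [LinearOrder R] [IsStrictOrderedRing R]

lemma Cplx.deg2 : (X ^ 2 + 1 : R[X]).degree = 2 := by
  rw [← Polynomial.C_1]; exact Polynomial.degree_X_pow_add_C (by norm_num) 1

lemma Cplx.monic2 : (X ^ 2 + 1 : R[X]).Monic := by
  simpa using Polynomial.monic_X_pow_add_C (a := (1 : R)) (n := 2) (by norm_num)

lemma Cplx.algInj : Function.Injective (algebraMap R (Cplx R)) := by
  rw [AdjoinRoot.algebraMap_eq]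
  exact AdjoinRoot.of.injective_of_degree_ne_zero (by rw [Cplx.deg2]; norm_num)

lemma Cplx.exists_rep (z : Cplx R) :
    ∃ x y : R, z = algebraMap R (Cplx R) x + algebraMap R (Cplx R) y * Cplx.I R := by
  obtain ⟨p, rfl⟩ := AdjoinRoot.mk_surjective z
  set q := p %ₘ (X ^ 2 + 1) with hq
  have hdvd : (X ^ 2 + 1 : R[X]) ∣ p - q := by
    rw [hq, Polynomial.modByMonic_eq_sub_mul_div p (X ^ 2 + 1), sub_sub_cancel]
    exact Dvd.intro _ rfl
  have hmk : AdjoinRoot.mk _ p = AdjoinRoot.mk _ q := AdjoinRoot.mk_eq_mk.2 hdvd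
  have hdeg : q.degree ≤ 1 := by
    have h2 := Polynomial.degree_modByMonic_lt p Cplx.monic2
    rw [Cplx.deg2] at h2
    rw [← hq] at h2
    exact Order.le_of_lt_succ (by exact_mod_cast h2)
  refine ⟨q.coeff 0, q.coeff 1, ?_⟩
  rw [hmk]
  conv_lhs => rw [Polynomial.eq_X_add_C_of_degree_le_one hdeg]
  simp only [_root_.map_add, _root_.map_mul, AdjoinRoot.mk_C, AdjoinRoot.mk_X,
    AdjoinRoot.algebraMap_eq]
  show AdjoinRoot.of _ _ * AdjoinRoot.root _ + AdjoinRoot.of _ _ =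
    AdjoinRoot.of _ _ + AdjoinRoot.of _ _ * AdjoinRoot.root _
  ring

lemma Cplx.conj_algebraMap (x : R) :
    Cplx.conj (algebraMap R (Cplx R) x) = algebraMap R (Cplx R) x := by
  rw [AdjoinRoot.algebraMap_eq]
  unfold Cplx.conj
  rw [AdjoinRoot.lift_of, AdjoinRoot.algebraMap_eq]

lemma Cplx.conj_I' : Cplx.conj (Cplx.I R) = -(Cplx.I R) := by
  unfold Cplx.conj Cplx.I
  exact AdjoinRoot.lift_root _

lemma Cplx.nonneg_algebraMap_iff {r : R} :
    Cplx.nonneg (algebraMap R (Cplx R) r) ↔ 0 ≤ r := by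
  constructor
  · rintro ⟨r', hr', heq⟩
    rwa [Cplx.algInj heq]
  · intro hr; exact ⟨r, hr, rfl⟩

lemma Cplx.conj_rep (x y : R) :
    Cplx.conj (algebraMap R (Cplx R) x + algebraMap R (Cplx R) y * Cplx.I R)
      = algebraMap R (Cplx R) x - algebraMap R (Cplx R) y * Cplx.I R := by
  rw [_root_.map_add, _root_.map_mul, Cplx.conj_algebraMap, Cplx.conj_algebraMap, Cplx.conj_I']
  ring

lemma Cplx.rep_mul_conj (x y : R) :
    (algebraMap R (Cplx R) x + algebraMap R (Cplx R) y * Cplx.I R) *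
      (algebraMap R (Cplx R) x - algebraMap R (Cplx R) y * Cplx.I R)
      = algebraMap R (Cplx R) (x ^ 2 + y ^ 2) := by
  rw [_root_.map_add, _root_.map_pow, _root_.map_pow]
  linear_combination (-(algebraMap R (Cplx R) y * algebraMap R (Cplx R) y)) * Cplx.I_sq R

lemma Cplx.emb_one (f : ℝ →+* R) : Cplx.emb f 1 = 1 := _root_.map_one _

lemma Cplx.emb_neg_one (f : ℝ →+* R) : Cplx.emb f (-1) = -1 := by
  rw [_root_.map_neg, _root_.map_one]

lemma Cplx.emb_I (f : ℝ →+* R) : Cplx.emb f Complex.I = Cplx.I R := by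
  show algebraMap R (Cplx R) (f Complex.I.re) +
      algebraMap R (Cplx R) (f Complex.I.im) * Cplx.I R = Cplx.I R
  simp [Complex.I_re, Complex.I_im]

lemma Cplx.emb_neg_I (f : ℝ →+* R) : Cplx.emb f (-Complex.I) = -(Cplx.I R) := by
  rw [_root_.map_neg, Cplx.emb_I]

end AuxCplx

section AuxGroupAlg

variable {G : Type u} [Group G]

lemma gstar_single (g : G) (c : ℂ) :
    gstar G (MonoidAlgebra.single g c) = MonoidAlgebra.single g⁻¹ (starRingEnd ℂ c) := by
  unfold gstar
  rw [MonoidAlgebra.coeff_single, Finsupp.sum_single_index]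
  simp

lemma gstar_add (a b : MonoidAlgebra ℂ G) : gstar G (a + b) = gstar G a + gstar G b := by
  unfold gstar
  rw [MonoidAlgebra.coeff_add]
  exact Finsupp.sum_add_index' (by simp) (by intros; rw [_root_.map_add]; exact MonoidAlgebra.single_add _ _ _)

lemma gstar_zero : gstar G 0 = 0 := by
  unfold gstar; exact Finsupp.sum_zero_index

lemma gstar_neg (a : MonoidAlgebra ℂ G) : gstar G (-a) = -gstar G a := by
  have h := gstar_add (-a) a
  rw [neg_add_cancel, gstar_zero] at h
  exact eq_neg_of_add_eq_zero_left h.symm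

lemma gstar_sub (a b : MonoidAlgebra ℂ G) : gstar G (a - b) = gstar G a - gstar G b := by
  rw [sub_eq_add_neg, gstar_add, gstar_neg, sub_eq_add_neg]

lemma gstar_smul (c : ℂ) (a : MonoidAlgebra ℂ G) :
    gstar G (c • a) = (starRingEnd ℂ c) • gstar G a := by
  unfold gstar
  rw [MonoidAlgebra.coeff_smul, Finsupp.sum_smul_index (by simp), Finsupp.smul_sum]
  refine Finsupp.sum_congr fun g _ => ?_
  rw [_root_.map_mul, MonoidAlgebra.smul_single']

lemma aug_single (g : G) (c : ℂ) : aug G (MonoidAlgebra.single g c) = c := by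
  simp [aug, MonoidAlgebra.lift_single]

lemma omega_add {a b : MonoidAlgebra ℂ G} (ha : a ∈ omega G) (hb : b ∈ omega G) :
    a + b ∈ omega G := by
  have := _root_.map_add (aug G) a b
  simp only [omega, Set.mem_setOf_eq] at *
  rw [this, ha, hb, add_zero]

lemma omega_smul (c : ℂ) {a : MonoidAlgebra ℂ G} (ha : a ∈ omega G) :
    c • a ∈ omega G := by
  have := _root_.map_smul (aug G) c a
  simp only [omega, Set.mem_setOf_eq] at *
  rw [this, ha, smul_zero]

lemma omega_sub {a b : MonoidAlgebra ℂ G} (ha : a ∈ omega G) (hb : b ∈ omega G) :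
    a - b ∈ omega G := by
  have := _root_.map_sub (aug G) a b
  simp only [omega, Set.mem_setOf_eq] at *
  rw [this, ha, hb, sub_zero]

lemma omega_mul_right (a : MonoidAlgebra ℂ G) {b : MonoidAlgebra ℂ G} (hb : b ∈ omega G) :
    a * b ∈ omega G := by
  have := _root_.map_mul (aug G) a b
  simp only [omega, Set.mem_setOf_eq] at *
  rw [this, hb, mul_zero]

lemma cE_mem (g : G) : cE G g ∈ omega G := by
  simp only [omega, Set.mem_setOf_eq, cE, MonoidAlgebra.of_apply]
  rw [_root_.map_sub, _root_.map_one, aug_single, sub_self]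

lemma gstar_Y (s h : G) :
    gstar G (gstar G (cE G s) * cE G h) = gstar G (cE G h) * cE G s := by
  simp only [cE, MonoidAlgebra.of_apply, MonoidAlgebra.one_def, gstar_sub, gstar_single,
    sub_mul, mul_sub, MonoidAlgebra.single_mul_single, _root_.map_one, one_mul, mul_one,
    _root_.mul_inv_rev, inv_inv, inv_one]
  abel

lemma keyY (l : ℂ) (hl : starRingEnd ℂ l * l = 1) (s h : G) :
    gstar G (cE G s + l • cE G h) * (cE G s + l • cE G h)
      = gstar G (cE G s) * cE G s + gstar G (cE G h) * cE G h
        + l • (gstar G (cE G s) * cE G h)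
        + (starRingEnd ℂ l) • (gstar G (cE G h) * cE G s) := by
  have hl' : l * starRingEnd ℂ l = 1 := by rw [mul_comm]; exact hl
  rw [gstar_add, gstar_smul]
  simp only [add_mul, mul_add, smul_add, smul_mul_assoc, mul_smul_comm, smul_smul, hl, hl',
    one_smul]
  abel

lemma key2 (s h : G) :
    gstar G (cE G s - MonoidAlgebra.of ℂ G s * cE G h) *
        (cE G s - MonoidAlgebra.of ℂ G s * cE G h)
      = (gstar G (cE G s) * cE G s + gstar G (cE G s) * cE G s)
        + (gstar G (cE G h) * cE G h + gstar G (cE G h) * cE G h)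
        - gstar G (cE G (s * h)) * cE G (s * h) := by
  simp only [cE, MonoidAlgebra.of_apply, MonoidAlgebra.one_def, mul_sub, sub_mul,
    MonoidAlgebra.single_mul_single, one_mul, mul_one, gstar_sub, gstar_add, gstar_single,
    _root_.map_one, _root_.mul_inv_rev, inv_inv, inv_one, mul_assoc, mul_inv_cancel_left,
    inv_mul_cancel_left, mul_inv_cancel, inv_mul_cancel]
  abel

end AuxGroupAlg

set_option maxHeartbeats 2000000

/-- **Basic estimates for completely positive functionals on the augmentation ideal.**
For all `s, h ∈ Γ`:
(i) `|φ(c(s)*c(h))| ≤ (1/√2)·(φ(c(s)*c(s)) + φ(c(h)*c(h)))` (the absolute value being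
encoded by the element `t ≥ 0` of `R` with `t² = |φ(c(s)*c(h))|²`), and
(ii) `φ(c(sh)*c(sh)) ≤ 2·(φ(c(s)*c(s)) + φ(c(h)*c(h)))`. -/
theorem omega_cp_bounds {R : Type v} [Field R] [LinearOrder R] [IsStrictOrderedRing R] (f : ℝ →+*o R)
    (hR : IsRealClosed' R) (φ : MonoidAlgebra ℂ Γ → Cplx R)
    (hlin : OmegaHermLinear f.toRingHom φ) (hcp : OmegaCompletelyPositive φ)
    (s h : Γ) :
    (∀ t : R, 0 ≤ t →
      algebraMap R (Cplx R) (t ^ 2) =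
        φ (gstar Γ (cE Γ s) * cE Γ h) * Cplx.conj (φ (gstar Γ (cE Γ s) * cE Γ h)) →
      Cplx.nonneg (algebraMap R (Cplx R) (f (Real.sqrt 2)⁻¹) *
          (φ (gstar Γ (cE Γ s) * cE Γ s) + φ (gstar Γ (cE Γ h) * cE Γ h)) -
        algebraMap R (Cplx R) t)) ∧
    Cplx.nonneg (2 * (φ (gstar Γ (cE Γ s) * cE Γ s) + φ (gstar Γ (cE Γ h) * cE Γ h)) -
      φ (gstar Γ (cE Γ (s * h)) * cE Γ (s * h))) := by
  classical
  obtain ⟨hφadd, hφsm, hφstar⟩ := hlin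
  have hφsub : ∀ p q : MonoidAlgebra ℂ Γ, p ∈ omega Γ → q ∈ omega Γ →
      φ (p - q) = φ p - φ q := by
    intro p q hp hq
    have h2 := hφadd (p - q) q (omega_sub hp hq) hq
    rw [sub_add_cancel] at h2
    exact eq_sub_of_add_eq h2.symm
  have hPos : ∀ a ∈ omega Γ, Cplx.nonneg (φ (gstar Γ a * a)) := by
    intro a ha
    have h1 := hcp 1 1 (fun _ => Matrix.of fun _ _ => a) (fun _ _ _ => ha) (fun _ => 1)
    simpa [Matrix.mul_apply, mstar, Finset.sum_apply, Fin.sum_univ_one] using h1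
  have hcs := cE_mem (G := Γ) s
  have hch := cE_mem (G := Γ) h
  have memA : gstar Γ (cE Γ s) * cE Γ s ∈ omega Γ := omega_mul_right _ hcs
  have memB : gstar Γ (cE Γ h) * cE Γ h ∈ omega Γ := omega_mul_right _ hch
  have memY : gstar Γ (cE Γ s) * cE Γ h ∈ omega Γ := omega_mul_right _ hch
  have memY' : gstar Γ (cE Γ h) * cE Γ s ∈ omega Γ := omega_mul_right _ hcs
  obtain ⟨a, ha0, hAa⟩ := hPos _ hcs
  obtain ⟨b, hb0, hBb⟩ := hPos _ hch
  constructor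
  · -- part (i)
    obtain ⟨x, y, hY⟩ := Cplx.exists_rep (φ (gstar Γ (cE Γ s) * cE Γ h))
    have hY' : φ (gstar Γ (cE Γ h) * cE Γ s)
        = algebraMap R (Cplx R) x - algebraMap R (Cplx R) y * Cplx.I R := by
      rw [← gstar_Y, hφstar _ memY, hY, Cplx.conj_rep]
    have hval : ∀ l : ℂ, starRingEnd ℂ l * l = 1 →
        φ (gstar Γ (cE Γ s + l • cE Γ h) * (cE Γ s + l • cE Γ h))
          = algebraMap R (Cplx R) a + algebraMap R (Cplx R) b
            + Cplx.emb f.toRingHom l * φ (gstar Γ (cE Γ s) * cE Γ h)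
            + Cplx.emb f.toRingHom (starRingEnd ℂ l) * φ (gstar Γ (cE Γ h) * cE Γ s) := by
      intro l hl
      have m1 := omega_add memA memB
      have m2 := omega_add m1 (omega_smul l memY)
      rw [keyY l hl, hφadd _ _ m2 (omega_smul (starRingEnd ℂ l) memY'),
        hφadd _ _ m1 (omega_smul l memY), hφadd _ _ memA memB,
        hφsm l _ memY, hφsm (starRingEnd ℂ l) _ memY', hAa, hBb]
    -- lambda = 1
    have hq1 := hPos _ (omega_add hcs (omega_smul (1 : ℂ) hch))
    rw [hval 1 (by simp), hY, hY'] at hq1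
    simp only [_root_.map_one, one_mul] at hq1
    have e1 : algebraMap R (Cplx R) a + algebraMap R (Cplx R) b
        + (algebraMap R (Cplx R) x + algebraMap R (Cplx R) y * Cplx.I R)
        + (algebraMap R (Cplx R) x - algebraMap R (Cplx R) y * Cplx.I R)
        = algebraMap R (Cplx R) (a + b + (x + x)) := by
      simp only [_root_.map_add]; ring
    rw [e1] at hq1
    have h1 := Cplx.nonneg_algebraMap_iff.1 hq1
    -- lambda = -1
    have hq2 := hPos _ (omega_add hcs (omega_smul (-1 : ℂ) hch))
    rw [hval (-1) (by simp), hY, hY'] at hq2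
    simp only [_root_.map_neg, _root_.map_one, neg_mul, one_mul] at hq2
    have e2 : algebraMap R (Cplx R) a + algebraMap R (Cplx R) b
        + -(algebraMap R (Cplx R) x + algebraMap R (Cplx R) y * Cplx.I R)
        + -(algebraMap R (Cplx R) x - algebraMap R (Cplx R) y * Cplx.I R)
        = algebraMap R (Cplx R) (a + b - (x + x)) := by
      simp only [_root_.map_add, _root_.map_sub]; ring
    rw [e2] at hq2
    have h2 := Cplx.nonneg_algebraMap_iff.1 hq2
    -- lambda = I
    have hq3 := hPos _ (omega_add hcs (omega_smul (Complex.I) hch))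
    rw [hval Complex.I (by simp [Complex.conj_I]), hY, hY'] at hq3
    simp only [Complex.conj_I, Cplx.emb_I, Cplx.emb_neg_I, neg_mul] at hq3
    have e3 : algebraMap R (Cplx R) a + algebraMap R (Cplx R) b
        + Cplx.I R * (algebraMap R (Cplx R) x + algebraMap R (Cplx R) y * Cplx.I R)
        + -(Cplx.I R * (algebraMap R (Cplx R) x - algebraMap R (Cplx R) y * Cplx.I R))
        = algebraMap R (Cplx R) (a + b - (y + y)) := by
      simp only [_root_.map_add, _root_.map_sub]
      linear_combination (algebraMap R (Cplx R) y + algebraMap R (Cplx R) y) * Cplx.I_sq R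
    rw [e3] at hq3
    have h3 := Cplx.nonneg_algebraMap_iff.1 hq3
    -- lambda = -I
    have hq4 := hPos _ (omega_add hcs (omega_smul (-Complex.I) hch))
    rw [hval (-Complex.I) (by simp [Complex.conj_I]), hY, hY'] at hq4
    simp only [_root_.map_neg, Complex.conj_I, neg_neg, Cplx.emb_I, Cplx.emb_neg_I,
      neg_mul] at hq4
    have e4 : algebraMap R (Cplx R) a + algebraMap R (Cplx R) b
        + -(Cplx.I R * (algebraMap R (Cplx R) x + algebraMap R (Cplx R) y * Cplx.I R))
        + Cplx.I R * (algebraMap R (Cplx R) x - algebraMap R (Cplx R) y * Cplx.I R)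
        = algebraMap R (Cplx R) (a + b + (y + y)) := by
      simp only [_root_.map_add]
      linear_combination (-(algebraMap R (Cplx R) y + algebraMap R (Cplx R) y)) * Cplx.I_sq R
    rw [e4] at hq4
    have h4 := Cplx.nonneg_algebraMap_iff.1 hq4
    -- conclude
    intro t ht hteq
    rw [hY, Cplx.conj_rep, Cplx.rep_mul_conj] at hteq
    have ht2 : t ^ 2 = x ^ 2 + y ^ 2 := Cplx.algInj hteq
    rw [hAa, hBb]
    have hrw : algebraMap R (Cplx R) (f (Real.sqrt 2)⁻¹)
          * (algebraMap R (Cplx R) a + algebraMap R (Cplx R) b)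
          - algebraMap R (Cplx R) t
        = algebraMap R (Cplx R) (f (Real.sqrt 2)⁻¹ * (a + b) - t) := by
      simp only [_root_.map_add, _root_.map_sub, _root_.map_mul]
    rw [hrw, Cplx.nonneg_algebraMap_iff]
    have hc0 : (0 : R) ≤ f (Real.sqrt 2)⁻¹ := by
      have h0 : f (0:ℝ) ≤ f (Real.sqrt 2)⁻¹ :=
        OrderHomClass.mono f (show (0:ℝ) ≤ (Real.sqrt 2)⁻¹ by positivity)
      rwa [map_zero] at h0
    have hc2 : (f (Real.sqrt 2)⁻¹) ^ 2 = 2⁻¹ := by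
      rw [← _root_.map_pow]
      have h5 : ((Real.sqrt 2)⁻¹ : ℝ) ^ 2 = 2⁻¹ := by
        rw [inv_pow, Real.sq_sqrt (by norm_num : (0:ℝ) ≤ 2)]
      rw [h5, map_inv₀, map_ofNat]
    have hx2 : (x + x) ^ 2 ≤ (a + b) ^ 2 := sq_le_sq' (by linarith) (by linarith)
    have hy2 : (y + y) ^ 2 ≤ (a + b) ^ 2 := sq_le_sq' (by linarith) (by linarith)
    have hab : (0 : R) ≤ a + b := by linarith
    have hu0 : (0 : R) ≤ f (Real.sqrt 2)⁻¹ * (a + b) := mul_nonneg hc0 hab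
    have hu2 : (f (Real.sqrt 2)⁻¹ * (a + b)) ^ 2 = (a + b) ^ 2 * 2⁻¹ := by
      rw [mul_pow, hc2]; ring
    nlinarith [ht2, hx2, hy2, ht, hu0, hu2]
  · -- part (ii)
    have hdd : cE Γ s - MonoidAlgebra.of ℂ Γ s * cE Γ h ∈ omega Γ :=
      omega_sub hcs (omega_mul_right _ hch)
    have hp := hPos _ hdd
    rw [key2] at hp
    have memD : gstar Γ (cE Γ (s * h)) * cE Γ (s * h) ∈ omega Γ :=
      omega_mul_right _ (cE_mem _)
    have m1 := omega_add memA memA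
    have m2 := omega_add memB memB
    rw [hφsub _ _ (omega_add m1 m2) memD, hφadd _ _ m1 m2, hφadd _ _ memA memA,
      hφadd _ _ memB memB] at hp
    have e5 : 2 * (φ (gstar Γ (cE Γ s) * cE Γ s) + φ (gstar Γ (cE Γ h) * cE Γ h))
          - φ (gstar Γ (cE Γ (s * h)) * cE Γ (s * h))
        = φ (gstar Γ (cE Γ s) * cE Γ s) + φ (gstar Γ (cE Γ s) * cE Γ s)
          + (φ (gstar Γ (cE Γ h) * cE Γ h) + φ (gstar Γ (cE Γ h) * cE Γ h))
          - φ (gstar Γ (cE Γ (s * h)) * cE Γ (s * h)) := by ring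
    rw [e5]
    exact hp
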